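/- Let g : ℝᴺ → ℝ^q be differentiable and consider the constraint system in the variables (z,u) ∈ ℝᴺ × ℝ^q given by the inequality constraints −u_i ≤ 0 and g_i(z) ≤ 0 (i = 1,…,q) and the single equality constraint h(z,u) := Σ_i u_i g_i(z) = 0. Then at every feasible point (z̄,ū) (i.e., ū ≥ 0, g(z̄) ≤ 0, ūᵀg(z̄) = 0) the Mangasarian–Fromovitz constraint qualification fails: there exist multipliers α¹, α² ∈ ℝ^q with α¹ ≥ 0, α² ≥ 0, α¹_i ū_i = 0 and α²_i g_i(z̄) = 0 for all i, and β ∈ ℝ with (α¹, α², β) ≠ 0, such that the gradient combination vanishes: Σ_i α¹_i ∇(−u_i)(z̄,ū) + Σ_i α²_i ∇(g_i∘π_z)(z̄,ū) + β ∇h(z̄,ū) = 0, where all gradients are taken with respect to (z,u). (One may take α¹ = −g(z̄), α² = ū, β = −1.) -/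

import Mathlib

/-- The Mangasarian–Fromovitz constraint qualification fails at every feasible
point of the complementarity system −u ≤ 0, g(z) ≤ 0, Σᵢ uᵢ gᵢ(z) = 0 (in the
variables (z,u)): there are multipliers (α¹,α²,β) ≠ 0 with α¹,α² ≥ 0,
α¹ᵢ ūᵢ = 0, α²ᵢ gᵢ(z̄) = 0, whose derivative combination vanishes. -/
theorem stmt_14 {N q : ℕ} (g : Fin q → (Fin N → ℝ) → ℝ)
    (hg : ∀ i, Differentiable ℝ (g i))
    (zb : Fin N → ℝ) (ub : Fin q → ℝ)
    (hub : ∀ i, 0 ≤ ub i) (hgzb : ∀ i, g i zb ≤ 0)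
    (hcomp : ∑ i, ub i * g i zb = 0) :
    ∃ (α₁ α₂ : Fin q → ℝ) (β : ℝ),
      (∀ i, 0 ≤ α₁ i) ∧ (∀ i, 0 ≤ α₂ i) ∧
      (∀ i, α₁ i * ub i = 0) ∧ (∀ i, α₂ i * g i zb = 0) ∧
      ¬(α₁ = 0 ∧ α₂ = 0 ∧ β = 0) ∧
      (∑ i, α₁ i • fderiv ℝ
          (fun w : (Fin N → ℝ) × (Fin q → ℝ) => -(w.2 i)) (zb, ub)) +
        (∑ i, α₂ i • fderiv ℝ
          (fun w : (Fin N → ℝ) × (Fin q → ℝ) => g i w.1) (zb, ub)) +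
        β • fderiv ℝ
          (fun w : (Fin N → ℝ) × (Fin q → ℝ) => ∑ j, w.2 j * g j w.1) (zb, ub) = 0 := by
  -- each complementarity product vanishes
  have hterm : ∀ i, ub i * g i zb = 0 := by
    intro i
    have hnonpos : ∀ j ∈ Finset.univ, ub j * g j zb ≤ 0 := fun j _ =>
      mul_nonpos_of_nonneg_of_nonpos (hub j) (hgzb j)
    have := (Finset.sum_eq_zero_iff_of_nonpos hnonpos).mp hcomp i (Finset.mem_univ i)
    exact this
  refine ⟨fun i => -g i zb, ub, -1, fun i => neg_nonneg.mpr (hgzb i), hub,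
    fun i => by linear_combination -hterm i, fun i => hterm i, ?_, ?_⟩
  · rintro ⟨-, -, hβ⟩; norm_num at hβ
  · -- differentiability facts
    have hgc : ∀ i, Differentiable ℝ (fun w : (Fin N → ℝ) × (Fin q → ℝ) => g i w.1) :=
      fun i => (hg i).comp differentiable_fst
    have hu : ∀ i, Differentiable ℝ (fun w : (Fin N → ℝ) × (Fin q → ℝ) => w.2 i) :=
      fun i => by fun_prop
    have hDneg : ∀ i, fderiv ℝ (fun w : (Fin N → ℝ) × (Fin q → ℝ) => -(w.2 i)) (zb, ub)
        = -fderiv ℝ (fun w : (Fin N → ℝ) × (Fin q → ℝ) => w.2 i) (zb, ub) := by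
      intro i; exact fderiv_fun_neg ..
    have hDsum : fderiv ℝ
        (fun w : (Fin N → ℝ) × (Fin q → ℝ) => ∑ j, w.2 j * g j w.1) (zb, ub)
        = ∑ j, (ub j • fderiv ℝ (fun w : (Fin N → ℝ) × (Fin q → ℝ) => g j w.1) (zb, ub)
            + g j zb • fderiv ℝ (fun w : (Fin N → ℝ) × (Fin q → ℝ) => w.2 j) (zb, ub)) := by
      rw [fderiv_fun_sum (A := fun j (w : (Fin N → ℝ) × (Fin q → ℝ)) => w.2 j * g j w.1) (fun j _ => ((hu j).mul (hgc j)) (zb, ub))]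
      refine Finset.sum_congr rfl fun j _ => ?_
      exact fderiv_mul ((hu j) (zb, ub)) ((hgc j) (zb, ub))
    rw [hDsum]
    simp only [hDneg, smul_neg, neg_smul, one_smul, neg_neg, smul_add, Finset.smul_sum]
    rw [← Finset.sum_add_distrib, ← Finset.sum_add_distrib]
    apply Finset.sum_eq_zero
    intro j _
    abel
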